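/- Fix a real number p > 1 and set λ_{n,k} = (1/n³)(1 + k/n^p) for integers n ≥ 1 and 0 ≤ k ≤ n−1. The family of vectors (H_{n,k})_{n ≥ 1, 0 ≤ k ≤ n−1} is an orthonormal (Hilbert) basis of the real Hilbert space ℓ²(ℕ, ℝ); the family of rank-one operators ( λ_{n,k} (H_{n,k} ⊗ H_{n,k}) )_{n ≥ 1, 0 ≤ k ≤ n−1} is summable in operator norm on ℓ²(ℕ, ℝ) with sum a self-adjoint positive semi-definite bounded operator T satisfying T H_{n,k} = λ_{n,k} H_{n,k} for all n, k, and ∑_{n=1}^∞ ∑_{k=0}^{n−1} λ_{n,k} < ∞. -/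

import Mathlib

open scoped BigOperators ENNReal

/-- The Hartley vector `H_{n,k} ∈ ℓ²(ℕ, ℝ)` supported on the `n`-th block
`{n(n-1)/2, …, n(n-1)/2 + n - 1}`, with
`H_{n,k}(n(n-1)/2 + l) = (1/√n)(cos(2πkl/n) + sin(2πkl/n))`. -/
noncomputable def Hvec (n k : ℕ) : lp (fun _ : ℕ => ℝ) 2 :=
  ∑ l ∈ Finset.range n, lp.single 2 (n * (n - 1) / 2 + l)
    ((1 / Real.sqrt n) *
      (Real.cos (2 * Real.pi * k * l / n) + Real.sin (2 * Real.pi * k * l / n)))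

open Finset

/-- block offset -/
def tOff (n : ℕ) : ℕ := n * (n - 1) / 2

lemma tOff_eq (n : ℕ) : tOff n = ∑ i ∈ range n, i := (Finset.sum_range_id n).symm

lemma tOff_succ (n : ℕ) : tOff (n + 1) = tOff n + n := by
  simp [tOff_eq, Finset.sum_range_succ]

lemma tOff_mono : Monotone tOff := by
  intro a b hab
  simp only [tOff_eq]
  exact Finset.sum_le_sum_of_subset (Finset.range_subset_range.2 hab)

lemma tOff_disj {n n' l l' : ℕ} (hl : l < n) (hl' : l' < n')
    (h : tOff n + l = tOff n' + l') : n = n' ∧ l = l' := by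
  have key : ∀ a b la lb : ℕ, la < a → lb < b → a < b → tOff a + la ≠ tOff b + lb := by
    intro a b la lb hla hlb hab
    have h1 : tOff a + la < tOff (a + 1) := by rw [tOff_succ]; omega
    have h2 : tOff (a + 1) ≤ tOff b := tOff_mono hab
    omega
  rcases lt_trichotomy n n' with h1 | h1 | h1
  · exact absurd h (key _ _ _ _ hl hl' h1)
  · subst h1; omega
  · exact absurd h.symm (key _ _ _ _ hl' hl h1)

lemma tOff_cover (j : ℕ) : ∃ n l, l < n ∧ j = tOff n + l := by
  induction j with
  | zero => exact ⟨1, 0, by omega, by simp [tOff]⟩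
  | succ j ih =>
    obtain ⟨n, l, hl, rfl⟩ := ih
    rcases Nat.lt_or_ge (l + 1) n with h | h
    · exact ⟨n, l + 1, h, by omega⟩
    · have : l + 1 = n := by omega
      exact ⟨n + 1, 0, by omega, by rw [tOff_succ]; omega⟩

open Complex in
lemma expsum (n : ℕ) (hn : 0 < n) (m : ℤ) :
    ∑ l ∈ Finset.range n, Complex.exp (2 * Real.pi * Complex.I * m * l / n)
      = if (n : ℤ) ∣ m then (n : ℂ) else 0 := by
  have hn' : (n : ℂ) ≠ 0 := Nat.cast_ne_zero.2 hn.ne'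
  have hterm : ∀ l : ℕ, Complex.exp (2 * Real.pi * Complex.I * m * l / n)
      = Complex.exp (2 * Real.pi * Complex.I * m / n) ^ l := by
    intro l
    rw [← Complex.exp_nat_mul]
    ring_nf
  simp only [hterm]
  by_cases hdvd : (n : ℤ) ∣ m
  · have hz : Complex.exp (2 * Real.pi * Complex.I * m / n) = 1 := by
      obtain ⟨q, hq⟩ := hdvd
      rw [Complex.exp_eq_one_iff]
      refine ⟨q, ?_⟩
      have hm : (m : ℂ) = n * q := by exact_mod_cast congrArg (Int.cast : ℤ → ℂ) hq
      rw [hm]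
      field_simp
    simp [hz, if_pos hdvd]
  · rw [if_neg hdvd]
    have h2 : (2 : ℂ) * Real.pi * Complex.I ≠ 0 := by
      simp [Real.pi_ne_zero, Complex.I_ne_zero]
    have hz1 : Complex.exp (2 * Real.pi * Complex.I * m / n) ≠ 1 := by
      intro h
      rw [Complex.exp_eq_one_iff] at h
      obtain ⟨t, ht⟩ := h
      apply hdvd
      have hm : (m : ℂ) = t * n := by
        field_simp at ht
        apply mul_left_cancel₀ h2
        linear_combination (2 * Real.pi * Complex.I) * ht
      have hm' : m = t * n := by exact_mod_cast hm
      exact ⟨t, by rw [hm']; ring⟩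
    have hzn : Complex.exp (2 * Real.pi * Complex.I * m / n) ^ n = 1 := by
      rw [← Complex.exp_nat_mul, Complex.exp_eq_one_iff]
      exact ⟨m, by field_simp⟩
    rw [geom_sum_eq hz1, hzn, sub_self, zero_div]

lemma cos_sum (n : ℕ) (hn : 0 < n) (m : ℤ) :
    ∑ l ∈ Finset.range n, Real.cos (2 * Real.pi * m * l / n)
      = if (n : ℤ) ∣ m then (n : ℝ) else 0 := by
  have h := congrArg Complex.re (expsum n hn m)
  rw [Complex.re_sum] at h
  convert h using 2 with l hl
  · rw [← Complex.exp_ofReal_mul_I_re]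
    congr 1
    push_cast
    ring
  · split_ifs <;> simp

lemma sin_sum (n : ℕ) (hn : 0 < n) (m : ℤ) :
    ∑ l ∈ Finset.range n, Real.sin (2 * Real.pi * m * l / n) = 0 := by
  have h := congrArg Complex.im (expsum n hn m)
  rw [Complex.im_sum] at h
  have h2 : (if (n : ℤ) ∣ m then (n : ℂ) else 0).im = 0 := by split_ifs <;> simp
  rw [h2] at h
  rw [← h]
  apply Finset.sum_congr rfl
  intro l hl
  rw [← Complex.exp_ofReal_mul_I_im]
  congr 1
  push_cast
  ring

/-- The Hartley coefficient. -/
noncomputable def hc (n k l : ℕ) : ℝ :=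
  (1 / Real.sqrt n) *
    (Real.cos (2 * Real.pi * k * l / n) + Real.sin (2 * Real.pi * k * l / n))

lemma hc_symm (n k l : ℕ) : hc n k l = hc n l k := by
  unfold hc
  ring_nf

lemma key_sum (n : ℕ) (hn : 0 < n) (a b : ℕ) (ha : a < n) (hb : b < n) :
    ∑ l ∈ Finset.range n, hc n a l * hc n b l = if a = b then 1 else 0 := by
  set m1 : ℤ := (a : ℤ) - b with hm1
  set m2 : ℤ := (a : ℤ) + b with hm2
  have hterm : ∀ l : ℕ, hc n a l * hc n b l
      = (1 / (n : ℝ)) * (Real.cos (2 * Real.pi * (m1 : ℝ) * l / n)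
          + Real.sin (2 * Real.pi * (m2 : ℝ) * l / n)) := by
    intro l
    unfold hc
    have h1 : (1 / Real.sqrt n) * (1 / Real.sqrt n) = 1 / (n : ℝ) := by
      rw [div_mul_div_comm, one_mul, Real.mul_self_sqrt (by positivity)]
    have hcos : Real.cos (2 * Real.pi * (m1 : ℝ) * l / n)
        = Real.cos (2 * Real.pi * a * l / n - 2 * Real.pi * b * l / n) := by
      congr 1; rw [hm1]; push_cast; ring
    have hsin : Real.sin (2 * Real.pi * (m2 : ℝ) * l / n)
        = Real.sin (2 * Real.pi * a * l / n + 2 * Real.pi * b * l / n) := by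
      congr 1; rw [hm2]; push_cast; ring
    rw [hcos, hsin, Real.cos_sub, Real.sin_add, ← h1]
    ring
  simp only [hterm]
  rw [← Finset.mul_sum, Finset.sum_add_distrib, cos_sum n hn, sin_sum n hn, add_zero]
  have hdvd : ((n : ℤ) ∣ m1) ↔ a = b := by
    constructor
    · intro h
      rcases h with ⟨c, hc⟩
      have hn' : (0 : ℤ) < n := by exact_mod_cast hn
      have hc0 : c = 0 := by
        by_contra hcne
        rcases lt_or_gt_of_ne hcne with h | h
        · have : (n : ℤ) * c ≤ -n := by nlinarith
          omega
        · have : (n : ℤ) * c ≥ n := by nlinarith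
          omega
      rw [hc0, mul_zero] at hc
      omega
    · rintro rfl; simp [hm1]
  split_ifs with h1 h2 h2
  · field_simp
  · exact absurd (hdvd.1 h1) h2
  · exact absurd (hdvd.2 h2) h1
  · simp

lemma Hvec_eq (n k : ℕ) :
    Hvec n k = ∑ l ∈ Finset.range n, lp.single 2 (tOff n + l) (hc n k l) := rfl

lemma Hvec_apply_in (n k l : ℕ) (hl : l < n) : Hvec n k (tOff n + l) = hc n k l := by
  rw [Hvec_eq, lp.coeFn_sum, Finset.sum_apply]
  rw [Finset.sum_eq_single l]
  · exact lp.single_apply_self 2 _ _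
  · intro l' _ hl'
    exact lp.single_apply_ne 2 _ _ (by omega)
  · intro h
    exact absurd (Finset.mem_range.2 hl) h

lemma Hvec_apply_out (n k j : ℕ) (hj : ∀ l, l < n → j ≠ tOff n + l) : Hvec n k j = 0 := by
  rw [Hvec_eq, lp.coeFn_sum, Finset.sum_apply]
  apply Finset.sum_eq_zero
  intro l hl
  exact lp.single_apply_ne 2 _ _ (hj l (Finset.mem_range.1 hl))

lemma inner_Hvec_left (n k : ℕ) (g : lp (fun _ : ℕ => ℝ) 2) :
    (inner ℝ (Hvec n k) g : ℝ) = ∑ l ∈ Finset.range n, hc n k l * g (tOff n + l) := by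
  rw [Hvec_eq, sum_inner]
  apply Finset.sum_congr rfl
  intro l _
  rw [lp.inner_single_left]
  simp [RCLike.inner_apply, mul_comm]

lemma Hvec_orthonormal (n n' k k' : ℕ) (hn : 0 < n) (hn' : 0 < n')
    (hk : k < n) (hk' : k' < n') :
    (inner ℝ (Hvec n k) (Hvec n' k') : ℝ) = if n = n' ∧ k = k' then 1 else 0 := by
  rw [inner_Hvec_left]
  by_cases hnn : n = n'
  · subst hnn
    have : ∀ l ∈ Finset.range n, hc n k l * Hvec n k' (tOff n + l) = hc n k l * hc n k' l := by
      intro l hl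
      rw [Hvec_apply_in n k' l (Finset.mem_range.1 hl)]
    rw [Finset.sum_congr rfl this, key_sum n hn k k' hk hk']
    simp
  · have : ∀ l ∈ Finset.range n, hc n k l * Hvec n' k' (tOff n + l) = 0 := by
      intro l hl
      rw [Hvec_apply_out n' k' _ fun l' hl' h => hnn (tOff_disj (Finset.mem_range.1 hl) hl' h).1]
      ring
    rw [Finset.sum_congr rfl this, Finset.sum_const_zero, if_neg (fun h => hnn h.1)]

lemma Hvec_inversion (n l0 : ℕ) (hn : 0 < n) (hl0 : l0 < n) :
    lp.single 2 (tOff n + l0) (1 : ℝ) = ∑ k ∈ Finset.range n, hc n k l0 • Hvec n k := by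
  apply lp.ext
  funext j
  rw [lp.coeFn_sum, Finset.sum_apply]
  have hterm : ∀ k : ℕ, (hc n k l0 • Hvec n k) j = hc n k l0 * Hvec n k j := by
    intro k
    rw [lp.coeFn_smul]
    rfl
  simp only [hterm]
  by_cases hj : ∃ l, l < n ∧ j = tOff n + l
  · obtain ⟨l, hl, rfl⟩ := hj
    have : ∀ k ∈ Finset.range n, hc n k l0 * Hvec n k (tOff n + l) = hc n l0 k * hc n l k := by
      intro k hk
      rw [Hvec_apply_in n k l hl, hc_symm n k l0, hc_symm n k l]
    rw [Finset.sum_congr rfl this, key_sum n hn l0 l hl0 hl]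
    by_cases h : l0 = l
    · subst h
      simp [lp.single_apply_self]
    · rw [if_neg h, lp.single_apply_ne 2 _ _ (by omega)]
  · push_neg at hj
    have h1 : ∀ k ∈ Finset.range n, hc n k l0 * Hvec n k j = 0 := by
      intro k _
      rw [Hvec_apply_out n k j fun l hl => hj l hl]
      ring
    rw [Finset.sum_eq_zero h1, lp.single_apply_ne 2 _ _ (fun h => hj l0 hl0 h)]

/-- The eigenvalue `λ_{n,k} = (1/n³)(1 + k/nᵖ)`. -/
noncomputable def lam (p : ℝ) (n k : ℕ) : ℝ := (1 / (n : ℝ) ^ 3) * (1 + (k : ℝ) / (n : ℝ) ^ p)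

/-- The rank-one operator `v ⊗ v : f ↦ ⟨f, v⟩ v` on a real Hilbert space. -/
noncomputable def rankOneR {H : Type*} [NormedAddCommGroup H] [InnerProductSpace ℝ H]
    (v : H) : H →L[ℝ] H := (innerSL ℝ v).smulRight v

/-- the indexed family -/
noncomputable def vfam (i : Σ n : ℕ, Fin (n + 1)) : lp (fun _ : ℕ => ℝ) 2 :=
  Hvec (i.1 + 1) (i.2 : ℕ)

lemma sigma_eq_iff (i j : Σ n : ℕ, Fin (n + 1)) :
    i = j ↔ i.1 = j.1 ∧ (i.2 : ℕ) = (j.2 : ℕ) := by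
  constructor
  · rintro rfl; exact ⟨rfl, rfl⟩
  · obtain ⟨a, b⟩ := i
    obtain ⟨c, d⟩ := j
    rintro ⟨h1, h2⟩
    dsimp at h1 h2
    subst h1
    simp only [Sigma.mk.inj_iff, heq_eq_eq, true_and]
    exact Fin.ext h2

lemma vfam_orthonormal : Orthonormal ℝ vfam := by
  rw [orthonormal_iff_ite]
  intro i j
  rw [vfam, vfam, Hvec_orthonormal (i.1 + 1) (j.1 + 1) (i.2 : ℕ) (j.2 : ℕ)
    (Nat.succ_pos _) (Nat.succ_pos _) i.2.isLt j.2.isLt]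
  congr 1
  simp only [eq_iff_iff]
  rw [sigma_eq_iff]
  omega

lemma single_mem_span (j : ℕ) (x : ℝ) :
    lp.single 2 j x ∈ Submodule.span ℝ (Set.range vfam) := by
  obtain ⟨n, l, hl, rfl⟩ := tOff_cover j
  have h1 : lp.single 2 (tOff n + l) x = x • (lp.single 2 (tOff n + l) (1 : ℝ) : lp (fun _ : ℕ => ℝ) 2) := by
    rw [← lp.single_smul (E := fun _ : ℕ => ℝ) (𝕜 := ℝ) 2 (tOff n + l) x (1 : ℝ), smul_eq_mul, mul_one]
  rw [h1, Hvec_inversion n l (by omega) hl]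
  apply Submodule.smul_mem
  apply Submodule.sum_mem
  intro k hk
  have hk' := Finset.mem_range.1 hk
  apply Submodule.smul_mem
  apply Submodule.subset_span
  refine ⟨⟨n - 1, ⟨k, by omega⟩⟩, ?_⟩
  show Hvec (n - 1 + 1) k = Hvec n k
  congr 1
  omega

lemma vfam_dense : ⊤ ≤ (Submodule.span ℝ (Set.range vfam)).topologicalClosure := by
  intro f _
  have hs := lp.hasSum_single (E := fun _ : ℕ => ℝ) (by norm_num : (2 : ℝ≥0∞) ≠ ⊤) f
  have hmem : f ∈ closure ((Submodule.span ℝ (Set.range vfam) : Submodule ℝ _) : Set _) := by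
    refine mem_closure_of_tendsto hs (Filter.Eventually.of_forall fun s => ?_)
    exact Submodule.sum_mem _ fun i _ => single_mem_span i (f i)
  rw [← SetLike.mem_coe, Submodule.topologicalClosure_coe]
  exact hmem

noncomputable def hb : HilbertBasis (Σ n : ℕ, Fin (n + 1)) ℝ (lp (fun _ : ℕ => ℝ) 2) :=
  HilbertBasis.mk vfam_orthonormal vfam_dense

lemma hb_eq (i : Σ n : ℕ, Fin (n + 1)) : hb i = vfam i := by
  rw [hb, HilbertBasis.coe_mk]

lemma lam_nonneg (p : ℝ) (n k : ℕ) (hn : 0 < n) : 0 ≤ lam p n k := by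
  unfold lam
  have h1 : (0:ℝ) < n := by exact_mod_cast hn
  positivity

lemma lam_le (p : ℝ) (hp : 1 ≤ p) (n k : ℕ) (hn : 0 < n) (hk : k ≤ n) :
    lam p n k ≤ 2 / (n : ℝ) ^ 3 := by
  have h1 : (1:ℝ) ≤ n := by exact_mod_cast hn
  have h2 : (k : ℝ) ≤ (n : ℝ) ^ p := by
    calc (k : ℝ) ≤ n := by exact_mod_cast hk
    _ = (n : ℝ) ^ (1:ℝ) := (Real.rpow_one _).symm
    _ ≤ (n : ℝ) ^ p := Real.rpow_le_rpow_of_exponent_le h1 hp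
  have h3 : (k : ℝ) / (n : ℝ) ^ p ≤ 1 := div_le_one_of_le₀ h2 (by positivity)
  have h4 : (1 : ℝ) + (k : ℝ) / (n : ℝ) ^ p ≤ 2 := by linarith
  unfold lam
  calc (1 / (n : ℝ) ^ 3) * (1 + (k : ℝ) / (n : ℝ) ^ p) ≤ (1 / (n : ℝ) ^ 3) * 2 :=
        mul_le_mul_of_nonneg_left h4 (by positivity)
  _ = 2 / (n : ℝ) ^ 3 := by ring

lemma base_summable : Summable (fun n : ℕ => 2 / ((n : ℝ) + 1) ^ 2) := by
  have h0 : Summable (fun n : ℕ => 1 / (n : ℝ) ^ 2) := Real.summable_one_div_nat_pow.2 one_lt_two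
  have h1 : Summable (fun n : ℕ => 1 / ((n : ℝ) + 1) ^ 2) := by
    have := (_root_.summable_nat_add_iff (f := fun n : ℕ => 1 / (n : ℝ) ^ 2) 1).2 h0
    simpa [Nat.cast_add] using this
  simpa [div_eq_mul_inv, one_div] using h1.mul_left 2

lemma lam_summable (p : ℝ) (hp : 1 < p) :
    Summable (fun i : Σ n : ℕ, Fin (n + 1) => lam p (i.1 + 1) (i.2 : ℕ)) := by
  rw [summable_sigma_of_nonneg (fun i => lam_nonneg p _ _ (Nat.succ_pos _))]
  refine ⟨fun n => Summable.of_finite, ?_⟩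
  apply Summable.of_nonneg_of_le
      (fun n => tsum_nonneg fun k => lam_nonneg p _ _ (Nat.succ_pos _))
      (fun n => ?_) base_summable
  rw [tsum_fintype]
  have hb : ∀ k : Fin (n + 1), lam p (n + 1) (k : ℕ) ≤ 2 / ((n : ℝ) + 1) ^ 3 := by
    intro k
    have := lam_le p hp.le (n + 1) (k : ℕ) (Nat.succ_pos _) (by omega)
    simpa [Nat.cast_add] using this
  calc ∑ k : Fin (n + 1), lam p (n + 1) (k : ℕ)
      ≤ ∑ _k : Fin (n + 1), 2 / ((n : ℝ) + 1) ^ 3 := Finset.sum_le_sum fun k _ => hb k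
  _ = ((n : ℕ) + 1 : ℕ) * (2 / ((n : ℝ) + 1) ^ 3) := by
      rw [Finset.sum_const, Finset.card_univ, Fintype.card_fin, nsmul_eq_mul]
  _ = 2 / ((n : ℝ) + 1) ^ 2 := by
      have hne : ((n : ℝ) + 1) ≠ 0 := by positivity
      push_cast
      field_simp

lemma vfam_norm (i : Σ n : ℕ, Fin (n + 1)) : ‖vfam i‖ = 1 := vfam_orthonormal.1 i

lemma op_norm_eq (p : ℝ) (i : Σ n : ℕ, Fin (n + 1)) :
    ‖lam p (i.1 + 1) (i.2 : ℕ) • rankOneR (vfam i)‖ = lam p (i.1 + 1) (i.2 : ℕ) := by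
  have h := norm_smul (lam p (i.1 + 1) (i.2 : ℕ)) (rankOneR (vfam i))
  rw [h, Real.norm_eq_abs, abs_of_nonneg (lam_nonneg p _ _ (Nat.succ_pos _)),
    rankOneR, ContinuousLinearMap.norm_smulRight_apply, innerSL_apply_norm, vfam_norm]
  simp [Nat.succ_eq_add_one]

lemma op_summable (p : ℝ) (hp : 1 < p) :
    Summable (fun i : Σ n : ℕ, Fin (n + 1) =>
      lam p (i.1 + 1) (i.2 : ℕ) • rankOneR (vfam i)) := by
  apply Summable.of_norm
  have := lam_summable p hp
  apply this.congr
  intro i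
  exact (op_norm_eq p i).symm

lemma Aterm_apply (p : ℝ) (i : Σ n : ℕ, Fin (n + 1)) (x : lp (fun _ : ℕ => ℝ) 2) :
    (lam p (i.1 + 1) (i.2 : ℕ) • rankOneR (vfam i)) x
      = lam p (i.1 + 1) (i.2 : ℕ) • ((inner ℝ (vfam i) x : ℝ) • vfam i) := by
  rw [ContinuousLinearMap.smul_apply, rankOneR, ContinuousLinearMap.smulRight_apply,
    innerSL_apply_apply]

theorem Hvec_basis_and_operator (p : ℝ) (hp : 1 < p) :
    (∃ b : HilbertBasis (Σ n : ℕ, Fin (n + 1)) ℝ (lp (fun _ : ℕ => ℝ) 2),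
        ∀ i : Σ n : ℕ, Fin (n + 1), b i = Hvec (i.1 + 1) (i.2 : ℕ)) ∧
    Summable (fun i : Σ n : ℕ, Fin (n + 1) => lam p (i.1 + 1) (i.2 : ℕ)) ∧
    Summable (fun i : Σ n : ℕ, Fin (n + 1) =>
      lam p (i.1 + 1) (i.2 : ℕ) • rankOneR (Hvec (i.1 + 1) (i.2 : ℕ))) ∧
    ∀ T : lp (fun _ : ℕ => ℝ) 2 →L[ℝ] lp (fun _ : ℕ => ℝ) 2,
      HasSum (fun i : Σ n : ℕ, Fin (n + 1) =>
          lam p (i.1 + 1) (i.2 : ℕ) • rankOneR (Hvec (i.1 + 1) (i.2 : ℕ))) T →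
        IsSelfAdjoint T ∧
        (∀ f : lp (fun _ : ℕ => ℝ) 2, 0 ≤ (inner ℝ f (T f) : ℝ)) ∧
        ∀ n k : ℕ, 1 ≤ n → k ≤ n - 1 → T (Hvec n k) = lam p n k • Hvec n k := by
  refine ⟨⟨hb, fun i => hb_eq i⟩, lam_summable p hp, op_summable p hp, ?_⟩
  intro T hT
  have hT' : HasSum (fun i : Σ n : ℕ, Fin (n + 1) =>
      lam p (i.1 + 1) (i.2 : ℕ) • rankOneR (vfam i)) T := hT
  refine ⟨?_, ?_, ?_⟩
  · -- self-adjoint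
    rw [ContinuousLinearMap.isSelfAdjoint_iff_isSymmetric]
    intro x y
    have hx := hT'.mapL (ContinuousLinearMap.apply ℝ _ x)
    have hy := hT'.mapL (ContinuousLinearMap.apply ℝ _ y)
    have h1 := hx.mapL (innerSL ℝ y)
    have h2 := hy.mapL (innerSL ℝ x)
    simp only [ContinuousLinearMap.apply_apply, innerSL_apply_apply] at h1 h2
    have hfun : (fun i : Σ n : ℕ, Fin (n + 1) =>
        (inner ℝ y ((lam p (i.1 + 1) (i.2 : ℕ) • rankOneR (vfam i)) x) : ℝ))
        = (fun i : Σ n : ℕ, Fin (n + 1) =>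
        (inner ℝ x ((lam p (i.1 + 1) (i.2 : ℕ) • rankOneR (vfam i)) y) : ℝ)) := by
      funext i
      rw [Aterm_apply, Aterm_apply, real_inner_smul_right, real_inner_smul_right,
        real_inner_smul_right, real_inner_smul_right]
      rw [real_inner_comm y (vfam i), real_inner_comm (vfam i) x]
      ring
    have heq : (inner ℝ y (T x) : ℝ) = inner ℝ x (T y) := (hfun ▸ h1).unique h2
    rw [real_inner_comm]
    exact heq
  · -- positivity
    intro f
    have hf := hT'.mapL (ContinuousLinearMap.apply ℝ _ f)
    have h1 := hf.mapL (innerSL ℝ f)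
    simp only [ContinuousLinearMap.apply_apply, innerSL_apply_apply] at h1
    rw [← h1.tsum_eq]
    apply tsum_nonneg
    intro i
    rw [Aterm_apply, real_inner_smul_right, real_inner_smul_right]
    apply mul_nonneg (lam_nonneg p _ _ (Nat.succ_pos _))
    rw [real_inner_comm f (vfam i)]
    exact mul_self_nonneg _
  · -- eigenvalues
    intro n k hn hk
    have hkn : k < n := by omega
    have hnm : n - 1 + 1 = n := by omega
    have hx := hT'.mapL (ContinuousLinearMap.apply ℝ _ (Hvec n k))
    simp only [ContinuousLinearMap.apply_apply] at hx
    set i0 : Σ m : ℕ, Fin (m + 1) := ⟨n - 1, ⟨k, by omega⟩⟩ with hi0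
    have hv0 : vfam i0 = Hvec n k := by
      show Hvec (n - 1 + 1) k = Hvec n k
      rw [hnm]
    have hl0 : lam p (i0.1 + 1) (i0.2 : ℕ) = lam p n k := by
      show lam p (n - 1 + 1) k = lam p n k
      rw [hnm]
    have hterm : (fun i : Σ m : ℕ, Fin (m + 1) =>
        (lam p (i.1 + 1) (i.2 : ℕ) • rankOneR (vfam i)) (Hvec n k))
        = fun i => if i = i0 then lam p n k • Hvec n k else 0 := by
      funext i
      rw [Aterm_apply]
      have hin : (inner ℝ (vfam i) (Hvec n k) : ℝ) = if i = i0 then 1 else 0 := by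
        rw [show vfam i = Hvec (i.1 + 1) (i.2 : ℕ) from rfl,
          Hvec_orthonormal (i.1 + 1) n (i.2 : ℕ) k (Nat.succ_pos _) (by omega) i.2.isLt hkn]
        congr 1
        simp only [eq_iff_iff]
        rw [sigma_eq_iff]
        show i.1 + 1 = n ∧ (i.2 : ℕ) = k ↔ i.1 = n - 1 ∧ (i.2 : ℕ) = k
        omega
      rw [hin]
      by_cases h : i = i0
      · rw [if_pos h, if_pos h, one_smul, h, hv0, hl0]
      · rw [if_neg h, if_neg h, zero_smul, smul_zero]
    rw [hterm] at hx
    exact hx.unique (hasSum_ite_eq i0 _)
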